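/- For every complex number z with |z| > 2 and every k > 0, there exists a constant C > 0 (independent of z) such that |z|^k · |∫_{z̄}^{z̄·∞} s^m · W̄(s) · e^{-zs} ds| · |W(z)| ≤ C · e^{-(|z|-1)^2}, where the integral is along the ray {z̄ t : t ≥ 1}. In particular, the difference χ_m^∞(z) − χ_m(z) decays super-exponentially as |z| → ∞, uniformly after multiplication by any fixed power of z. -/

import Mathlib

open MeasureTheory

lemma aux_pow_le_factorial_mul_exp (x : ℝ) (hx : 0 ≤ x) (n : ℕ) :
    x ^ n ≤ (Nat.factorial n) * Real.exp x := by
  have h1 : x ^ n / (Nat.factorial n) ≤ Real.exp x := by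
    refine le_trans ?_ (Real.sum_le_exp_of_nonneg hx (n + 1))
    exact Finset.single_le_sum (f := fun i => x ^ i / (Nat.factorial i))
      (fun i _ => by positivity) (Finset.self_mem_range_succ n)
  have hfac : (0 : ℝ) < (Nat.factorial n) := by positivity
  calc x ^ n = (x ^ n / (Nat.factorial n)) * (Nat.factorial n) := by field_simp
    _ ≤ Real.exp x * (Nat.factorial n) := by
        exact mul_le_mul_of_nonneg_right h1 hfac.le
    _ = (Nat.factorial n) * Real.exp x := by ring

set_option maxHeartbeats 2000000 in
/-- Super-exponential decay of `χ_m^∞ - χ_m`.  With `W` an analytic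
branch of `∏ (z - a j)^(c j)` off the cuts `B_j = {a j t : t ≥ 1}`, and
`W̄(s) = conj (W (conj s))`, for every `m` and every real `k > 0` there is a
constant `C > 0` (independent of `z`) such that for all `|z| > 2`,
`|z|^k * |∫_{z̄}^{z̄·∞} s^m W̄(s) e^{-zs} ds| * |W(z)| ≤ C * exp (-(|z|-1)^2)`,
the integral being along the ray `{z̄ t : t ≥ 1}`. -/
theorem chi_infty_minus_chi_decay
    (l : ℕ) (hl : 0 < l) (a : Fin l → ℂ) (ha0 : ∀ i, a i ≠ 0)
    (ha : Function.Injective fun i => Complex.arg (a i))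
    (c : Fin l → ℝ) (hc : ∀ i, 0 < c i)
    (W : ℂ → ℂ)
    (hW : DifferentiableOn ℂ W {z | ∀ j, ∀ t : ℝ, 1 ≤ t → z ≠ a j * t})
    (hWabs : ∀ z, ‖W z‖ = ∏ j, ‖z - a j‖ ^ (c j))
    (Wb : ℂ → ℂ) (hWb : ∀ s, Wb s = starRingEnd ℂ (W (starRingEnd ℂ s)))
    (m : ℕ) (k : ℝ) (hk : 0 < k) :
    ∃ C : ℝ, 0 < C ∧ ∀ z : ℂ, 2 < ‖z‖ →
      ‖z‖ ^ k *
        ‖(∫ t in Set.Ioi (1 : ℝ),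
          (starRingEnd ℂ z * t) ^ m * Wb (starRingEnd ℂ z * t) *
            Complex.exp (-(z * (starRingEnd ℂ z * t))) * starRingEnd ℂ z)‖ *
        ‖W z‖
      ≤ C * Real.exp (-(‖z‖ - 1) ^ 2) := by
  classical
  set A : ℝ := ∑ j, ‖a j‖ with hA
  have hA0 : 0 ≤ A := Finset.sum_nonneg fun i _ => (norm_nonneg _)
  have hAj : ∀ j, ‖a j‖ ≤ A := fun j =>
    Finset.single_le_sum (fun i _ => norm_nonneg _) (Finset.mem_univ j)
  set S : ℝ := ∑ j, c j with hS
  have hS0 : 0 ≤ S := Finset.sum_nonneg fun i _ => (hc i).le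
  set M : ℝ := 1 + A / 2 with hM
  have hM1 : 1 ≤ M := by simp [hM]; linarith
  have hM0 : 0 < M := lt_of_lt_of_le one_pos hM1
  set n : ℕ := ⌈k + m + 1 + 2 * S⌉₊ with hn
  have hexp : k + (m : ℝ) + 1 + 2 * S ≤ n := Nat.le_ceil _
  refine ⟨M ^ (2 * S) * (Nat.factorial n), by positivity, ?_⟩
  intro z hz
  set R := ‖z‖ with hR
  have hR2 : 2 < R := hz
  have hR0 : 0 < R := by linarith
  set f : ℝ → ℂ := fun t =>
    (starRingEnd ℂ z * t) ^ m * Wb (starRingEnd ℂ z * t) *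
      Complex.exp (-(z * (starRingEnd ℂ z * t))) * starRingEnd ℂ z with hf
  -- pointwise bound
  clear_value A S M n R f
  have key : ∀ t : ℝ, 1 ≤ t →
      R ^ k * ‖f t‖ * ‖W z‖
      ≤ (M ^ (2 * S) * (Nat.factorial n)) * Real.exp (-(R - 1) ^ 2) * Real.exp (-t) := by
    intro t ht
    have ht0 : 0 < t := lt_of_lt_of_le one_pos ht
    have hx0 : 0 < R * t := mul_pos hR0 ht0
    have hx1 : 1 ≤ R * t := by
      nlinarith [mul_le_mul hR2.le ht zero_le_one hR0.le]
    -- compute the absolute value of f t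
    have habs_zt : ‖starRingEnd ℂ z * (t : ℂ)‖ = R * t := by
      simp [map_mul, Complex.norm_real, Real.norm_eq_abs, abs_of_pos ht0, hR]
    have hconj : starRingEnd ℂ (starRingEnd ℂ z * (t : ℂ)) = z * (t : ℂ) := by
      simp [map_mul, Complex.conj_conj, Complex.conj_ofReal]
    have hexp_arg : z * (starRingEnd ℂ z * (t : ℂ)) = ((R ^ 2 * t : ℝ) : ℂ) := by
      rw [← mul_assoc, Complex.mul_conj, Complex.normSq_eq_norm_sq, ← hR]
      push_cast
      ring
    have habs_f : ‖f t‖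
        = (R * t) ^ m * ‖W (z * (t : ℂ))‖ * Real.exp (-(R ^ 2 * t)) * R := by
      rw [hf]
      simp only [map_mul, map_pow, norm_mul, norm_pow, habs_zt, hWb, hconj, Complex.norm_conj]
      rw [hexp_arg]
      rw [show (-(((R ^ 2 * t : ℝ)) : ℂ)) = (((-(R ^ 2 * t) : ℝ)) : ℂ) by push_cast; ring]
      rw [← Complex.ofReal_exp, Complex.norm_real, Real.norm_eq_abs, abs_of_pos (Real.exp_pos _), ← hR]
    -- bound |W (z*t)|
    have hWzt : ‖W (z * (t : ℂ))‖ ≤ ((R + A) * t) ^ S := by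
      rw [hWabs, hS, Real.rpow_sum_of_pos (mul_pos (by linarith : (0:ℝ) < R + A) ht0)]
      refine Finset.prod_le_prod (fun j _ => Real.rpow_nonneg (norm_nonneg _) _)
        (fun j _ => Real.rpow_le_rpow (norm_nonneg _) ?_ (hc j).le)
      calc ‖z * (t : ℂ) - a j‖
          ≤ ‖z * (t : ℂ)‖ + ‖a j‖ := by
            simpa [sub_eq_add_neg] using norm_add_le (z * (t : ℂ)) (-(a j))
        _ = R * t + ‖a j‖ := by
            simp [map_mul, Complex.norm_real, Real.norm_eq_abs, abs_of_pos ht0, hR]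
        _ ≤ (R + A) * t := by
            nlinarith [hAj j, mul_le_mul_of_nonneg_left ht hA0]
    -- bound |W z|
    have hWz : ‖W z‖ ≤ ((R + A) * t) ^ S := by
      rw [hWabs, hS, Real.rpow_sum_of_pos (mul_pos (by linarith : (0:ℝ) < R + A) ht0)]
      refine Finset.prod_le_prod (fun j _ => Real.rpow_nonneg (norm_nonneg _) _)
        (fun j _ => Real.rpow_le_rpow (norm_nonneg _) ?_ (hc j).le)
      calc ‖z - a j‖
          ≤ ‖z‖ + ‖a j‖ := by
            simpa [sub_eq_add_neg] using norm_add_le z (-(a j))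
        _ ≤ (R + A) * t := by
            nlinarith [hAj j, mul_le_mul_of_nonneg_left ht hA0,
              mul_le_mul_of_nonneg_left ht hR0.le]
    -- bound ((R+A)*t)^S ≤ M^S * (R*t)^S
    have hRA : (R + A) * t ≤ M * (R * t) := by
      have h1 : R + A ≤ M * R := by
        rw [hM]
        nlinarith [mul_nonneg hA0 (by linarith : (0:ℝ) ≤ R - 2)]
      have h2 := mul_le_mul_of_nonneg_right h1 ht0.le
      have h3 : M * R * t = M * (R * t) := mul_assoc M R t
      linarith
    have hRAS : ((R + A) * t) ^ S ≤ M ^ S * (R * t) ^ S := by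
      rw [← Real.mul_rpow hM0.le hx0.le]
      exact Real.rpow_le_rpow (mul_nonneg (by linarith) ht0.le) hRA hS0
    -- exponential splitting
    have hexp_split : Real.exp (-(R ^ 2 * t))
        ≤ Real.exp (-(R - 1) ^ 2) * Real.exp (-(R * t)) * Real.exp (-t) := by
      rw [← Real.exp_add, ← Real.exp_add]
      apply Real.exp_le_exp.mpr
      have hq : (0:ℝ) ≤ R ^ 2 - R - 1 := by
        nlinarith [mul_le_mul_of_nonneg_left hR2.le hR0.le]
      have hprod : (0:ℝ) ≤ (t - 1) * (R ^ 2 - R - 1) :=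
        mul_nonneg (by linarith) hq
      have hexpand : (t - 1) * (R ^ 2 - R - 1)
          = R ^ 2 * t - R * t - t - R ^ 2 + R + 1 := by ring
      have hsq : (R - 1) ^ 2 = R ^ 2 - 2 * R + 1 := by ring
      linarith
    -- polynomial collection
    have hpoly : R ^ k * ((R * t) ^ m * (M ^ S * (R * t) ^ S)
          * (M ^ S * (R * t) ^ S) * R)
        ≤ M ^ (2 * S) * (R * t) ^ (n : ℕ) := by
      have hRk : R ^ k ≤ (R * t) ^ k :=
        Real.rpow_le_rpow hR0.le (by nlinarith [mul_le_mul_of_nonneg_left ht hR0.le]) hk.le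
      have hstep : R ^ k * ((R * t) ^ m * (M ^ S * (R * t) ^ S)
            * (M ^ S * (R * t) ^ S) * R)
          = (M ^ S * M ^ S) * (R ^ k * ((R * t) ^ m * (R * t) ^ S * (R * t) ^ S * R)) := by
        ring
      rw [hstep]
      have hMM : M ^ S * M ^ S = M ^ (2 * S) := by
        rw [← Real.rpow_add hM0]; ring_nf
      rw [hMM]
      apply mul_le_mul_of_nonneg_left _ (Real.rpow_nonneg hM0.le _)
      have hcollect : R ^ k * ((R * t) ^ m * (R * t) ^ S * (R * t) ^ S * R)
          ≤ (R * t) ^ (k + m + 1 + 2 * S) := by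
        have h1 : (R * t) ^ m * (R * t) ^ S * (R * t) ^ S * R
            ≤ (R * t) ^ ((m : ℝ) + 1 + 2 * S) := by
          have hR_le : R ≤ (R * t) ^ (1 : ℝ) := by
            rw [Real.rpow_one]
            nlinarith [mul_le_mul_of_nonneg_left ht hR0.le]
          calc (R * t) ^ m * (R * t) ^ S * (R * t) ^ S * R
              ≤ (R * t) ^ (m : ℝ) * (R * t) ^ S * (R * t) ^ S * (R * t) ^ (1:ℝ) := by
                rw [Real.rpow_natCast]
                exact mul_le_mul_of_nonneg_left hR_le (by positivity)
            _ = (R * t) ^ ((m : ℝ) + 1 + 2 * S) := by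
                rw [← Real.rpow_add hx0, ← Real.rpow_add hx0, ← Real.rpow_add hx0]
                ring_nf
        calc R ^ k * ((R * t) ^ m * (R * t) ^ S * (R * t) ^ S * R)
            ≤ (R * t) ^ k * (R * t) ^ ((m : ℝ) + 1 + 2 * S) := by
              apply mul_le_mul hRk h1 (by positivity) (by positivity)
          _ = (R * t) ^ (k + m + 1 + 2 * S) := by
              rw [← Real.rpow_add hx0]; ring_nf
      calc R ^ k * ((R * t) ^ m * (R * t) ^ S * (R * t) ^ S * R)
          ≤ (R * t) ^ (k + m + 1 + 2 * S) := hcollect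
        _ ≤ (R * t) ^ ((n : ℕ) : ℝ) :=
            Real.rpow_le_rpow_of_exponent_le hx1 hexp
        _ = (R * t) ^ (n : ℕ) := Real.rpow_natCast _ _
    -- finish pointwise
    have hfact : (R * t) ^ (n : ℕ) * Real.exp (-(R * t)) ≤ (Nat.factorial n) := by
      have := aux_pow_le_factorial_mul_exp (R * t) hx0.le n
      rw [Real.exp_neg]
      rw [mul_inv_le_iff₀ (Real.exp_pos _)]
      linarith [this]
    calc R ^ k * ‖f t‖ * ‖W z‖
        = R ^ k * ((R * t) ^ m * ‖W (z * (t : ℂ))‖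
            * Real.exp (-(R ^ 2 * t)) * R) * ‖W z‖ := by rw [habs_f]
      _ ≤ R ^ k * ((R * t) ^ m * (M ^ S * (R * t) ^ S)
            * (Real.exp (-(R - 1) ^ 2) * Real.exp (-(R * t)) * Real.exp (-t)) * R)
            * (M ^ S * (R * t) ^ S) := by
          have hW1 : ‖W (z * (t : ℂ))‖ ≤ M ^ S * (R * t) ^ S :=
            hWzt.trans hRAS
          have hW2 : ‖W z‖ ≤ M ^ S * (R * t) ^ S := hWz.trans hRAS
          have e1 : (0:ℝ) ≤ R ^ k := Real.rpow_nonneg hR0.le _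
          have e2 : (0:ℝ) ≤ (R * t) ^ m := by positivity
          have e3 : (0:ℝ) ≤ Real.exp (-(R ^ 2 * t)) := (Real.exp_pos _).le
          have hin : (R * t) ^ m * ‖W (z * (t : ℂ))‖
              * Real.exp (-(R ^ 2 * t)) * R
              ≤ (R * t) ^ m * (M ^ S * (R * t) ^ S)
                * (Real.exp (-(R - 1) ^ 2) * Real.exp (-(R * t)) * Real.exp (-t)) * R := by
            apply mul_le_mul_of_nonneg_right _ hR0.le
            apply mul_le_mul
            · exact mul_le_mul_of_nonneg_left hW1 e2
            · exact hexp_split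
            · exact e3
            · positivity
          apply mul_le_mul
          · exact mul_le_mul_of_nonneg_left hin e1
          · exact hW2
          · exact norm_nonneg _
          · positivity
      _ = (R ^ k * ((R * t) ^ m * (M ^ S * (R * t) ^ S)
            * (M ^ S * (R * t) ^ S) * R)) * Real.exp (-(R * t))
            * (Real.exp (-(R - 1) ^ 2) * Real.exp (-t)) := by ring
      _ ≤ (M ^ (2 * S) * (R * t) ^ (n : ℕ)) * Real.exp (-(R * t))
            * (Real.exp (-(R - 1) ^ 2) * Real.exp (-t)) := by
          apply mul_le_mul_of_nonneg_right _ (by positivity)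
          exact mul_le_mul_of_nonneg_right hpoly (Real.exp_pos _).le
      _ = M ^ (2 * S) * ((R * t) ^ (n : ℕ) * Real.exp (-(R * t)))
            * (Real.exp (-(R - 1) ^ 2) * Real.exp (-t)) := by ring
      _ ≤ M ^ (2 * S) * ((Nat.factorial n)) * (Real.exp (-(R - 1) ^ 2) * Real.exp (-t)) := by
          apply mul_le_mul_of_nonneg_right _ (by positivity)
          exact mul_le_mul_of_nonneg_left hfact (Real.rpow_nonneg hM0.le _)
      _ = (M ^ (2 * S) * (Nat.factorial n)) * Real.exp (-(R - 1) ^ 2) * Real.exp (-t) := by ring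
  -- now the integral estimate
  have hnorm : ‖∫ t in Set.Ioi (1 : ℝ), f t‖
      ≤ ∫ t in Set.Ioi (1 : ℝ), ‖f t‖ := by
    simpa using
      norm_integral_le_integral_norm (μ := volume.restrict (Set.Ioi (1:ℝ))) f
  have hint_mono : ∫ t in Set.Ioi (1 : ℝ),
        R ^ k * ‖f t‖ * ‖W z‖
      ≤ ∫ t in Set.Ioi (1 : ℝ),
        (M ^ (2 * S) * (Nat.factorial n)) * Real.exp (-(R - 1) ^ 2) * Real.exp (-t) := by
    apply integral_mono_of_nonneg
    · filter_upwards with t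
      positivity
    · apply Integrable.const_mul
      have := exp_neg_integrableOn_Ioi (1 : ℝ) (one_pos)
      simpa [IntegrableOn] using this
    · filter_upwards [ae_restrict_mem measurableSet_Ioi] with t ht
      exact key t (le_of_lt ht)
  have hint_eq : ∫ t in Set.Ioi (1 : ℝ),
        R ^ k * ‖f t‖ * ‖W z‖
      = R ^ k * (∫ t in Set.Ioi (1 : ℝ), ‖f t‖) * ‖W z‖ := by
    rw [integral_mul_const, integral_const_mul]
  have hint_rhs : ∫ t in Set.Ioi (1 : ℝ),
        (M ^ (2 * S) * (Nat.factorial n)) * Real.exp (-(R - 1) ^ 2) * Real.exp (-t)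
      = ((M ^ (2 * S) * (Nat.factorial n)) * Real.exp (-(R - 1) ^ 2)) * Real.exp (-1) := by
    rw [integral_const_mul, integral_exp_neg_Ioi]
  have hfinal : R ^ k * (∫ t in Set.Ioi (1 : ℝ), ‖f t‖) * ‖W z‖
      ≤ (M ^ (2 * S) * (Nat.factorial n)) * Real.exp (-(R - 1) ^ 2) := by
    rw [← hint_eq]
    refine hint_mono.trans ?_
    rw [hint_rhs]
    have h1 : Real.exp (-1 : ℝ) ≤ 1 := Real.exp_le_one_iff.mpr (by norm_num)
    nlinarith [mul_pos (mul_pos (Real.rpow_pos_of_pos hM0 (2*S))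
      (by positivity : (0:ℝ) < ((Nat.factorial n) : ℝ))) (Real.exp_pos (-(R-1)^2))]
  calc R ^ k * ‖∫ t in Set.Ioi (1 : ℝ), f t‖ * ‖W z‖
      ≤ R ^ k * (∫ t in Set.Ioi (1 : ℝ), ‖f t‖) * ‖W z‖ := by
        apply mul_le_mul_of_nonneg_right _ (norm_nonneg _)
        exact mul_le_mul_of_nonneg_left hnorm (Real.rpow_nonneg hR0.le _)
    _ ≤ (M ^ (2 * S) * (Nat.factorial n)) * Real.exp (-(R - 1) ^ 2) := hfinal
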